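/- arXiv:1901.00467 — 3 statements merged into one kernel-verified Lean document; each statement's English description precedes it below -/
import Mathlib

section
/- For the Green's function G of the problem x''−x=0 with periodic boundary conditions x(0)=x(1), x'(0)=x'(1) on [0,1] (given explicitly as in the previous context), one has sup_{t∈[0,1]} ‖G(t,·)‖_{L²} = √((e² + 2e − 1)/(4(e−1)²)). -/
open Set Real MeasureTheory


lemma intExpLin (c d : ℝ) (hc : c ≠ 0) (a b : ℝ) :
    ∫ s in a..b, Real.exp (c*s + d) = (Real.exp (c*b + d) - Real.exp (c*a + d)) / c := by
  have hder : ∀ x : ℝ, HasDerivAt (fun s => Real.exp (c*s + d) / c) (Real.exp (c*x + d)) x := by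
    intro x
    have h1 : HasDerivAt (fun s : ℝ => c*s + d) c x := by
      simpa using ((hasDerivAt_id x).const_mul c).add_const d
    have h2 := (Real.hasDerivAt_exp (c*x+d)).comp x h1
    have := h2.div_const c
    rw [mul_div_cancel_right₀ _ hc] at this
    exact this
  rw [intervalIntegral.integral_eq_sub_of_hasDerivAt (fun x _ => hder x)
    ((Real.continuous_exp.comp (by continuity)).intervalIntegrable a b)]
  ring

lemma piece (A B t u v : ℝ) :
    ∫ s in u..v, (1/4)*(B^2*Real.exp (2*s + -2*t) + 2*B*A + A^2*Real.exp (-2*s + 2*t))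
      = (1/4)*(B^2*(Real.exp (2*v + -2*t) - Real.exp (2*u + -2*t))/2 + 2*B*A*(v-u)
          - A^2*(Real.exp (-2*v + 2*t) - Real.exp (-2*u + 2*t))/2) := by
  have c1 : Continuous fun s : ℝ => B^2*Real.exp (2*s + -2*t) := by continuity
  have c2 : Continuous fun s : ℝ => A^2*Real.exp (-2*s + 2*t) := by continuity
  rw [intervalIntegral.integral_const_mul,
    intervalIntegral.integral_add ((by fun_prop : Continuous fun s : ℝ => B^2*Real.exp (2*s + -2*t) + 2*B*A).intervalIntegrable u v)
      (c2.intervalIntegrable u v),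
    intervalIntegral.integral_add (c1.intervalIntegrable u v)
      (continuous_const.intervalIntegrable u v),
    intervalIntegral.integral_const_mul, intervalIntegral.integral_const_mul,
    intervalIntegral.integral_const, intervalIntegral.integral_const_mul,
    intExpLin 2 (-2*t) two_ne_zero, intExpLin (-2) (2*t) (by norm_num)]
  simp [smul_eq_mul]
  ring


noncomputable def periodicGreen (t s : ℝ) : ℝ :=
  if t ≤ s then
    (1/2) * ((1/(1 - exp 1)) * exp (s - t) + (exp 1/(1 - exp 1)) * exp (t - s))
  else
    (1/2) * ((exp 1/(1 - exp 1)) * exp (s - t) + (1/(1 - exp 1)) * exp (t - s))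


lemma sq_expand (p q A B : ℝ) (hpq : p * q = 1) :
    (1/2*(B*p + A*q))^2 = 1/4*(B^2*(p*p) + 2*B*A + A^2*(q*q)) := by
  linear_combination (A*B/2) * hpq

lemma exp_mul_exp (x y z w : ℝ) (h : x + y = z + w) :
    Real.exp x * Real.exp y = Real.exp (z + w) := by
  rw [← Real.exp_add, h]

lemma green_cont (t : ℝ) : Continuous (fun s => periodicGreen t s) := by
  unfold periodicGreen
  apply Continuous.if_le (by continuity) (by continuity) continuous_const continuous_id
  intro x hx
  simp only [id] at hx
  subst hx
  simp [sub_self]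
  ring

lemma green_norm_sq (t : ℝ) (h0 : 0 ≤ t) (h1 : t ≤ 1) :
    ∫ s in (0:ℝ)..1, (periodicGreen t s)^2
      = ((exp 1)^2 + 2*exp 1 - 1)/(4*(exp 1 - 1)^2) := by
  have hint : ∀ u v : ℝ, IntervalIntegrable (fun s => (periodicGreen t s)^2) volume u v :=
    fun u v => ((green_cont t).pow 2).intervalIntegrable u v
  rw [← intervalIntegral.integral_add_adjacent_intervals (hint 0 t) (hint t 1)]
  have e1 : ∫ s in (0:ℝ)..t, (periodicGreen t s)^2
      = ∫ s in (0:ℝ)..t, (1/4)*((exp 1/(1 - exp 1))^2*Real.exp (2*s + -2*t)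
          + 2*(exp 1/(1 - exp 1))*(1/(1 - exp 1))
          + (1/(1 - exp 1))^2*Real.exp (-2*s + 2*t)) := by
    apply intervalIntegral.integral_congr
    intro s hs
    rw [uIcc_of_le h0] at hs
    have hpq : Real.exp (s-t) * Real.exp (t-s) = 1 := by
      rw [← Real.exp_add]; norm_num
    have h2 : Real.exp (2*s + -2*t) = Real.exp (s-t) * Real.exp (s-t) := by
      rw [← Real.exp_add]; congr 1; ring
    have h3 : Real.exp (-2*s + 2*t) = Real.exp (t-s) * Real.exp (t-s) := by
      rw [← Real.exp_add]; congr 1; ring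
    by_cases hts : t ≤ s
    · have hst : s = t := le_antisymm hs.2 hts
      subst hst
      simp only [periodicGreen, if_pos le_rfl]
      rw [h2, h3]
      have := sq_expand (Real.exp (s-s)) (Real.exp (s-s)) (1/(1 - exp 1))
        (exp 1/(1 - exp 1)) hpq
      simp only [sub_self, Real.exp_zero] at this ⊢
      ring
    · simp only [periodicGreen, if_neg hts]
      rw [h2, h3]
      exact sq_expand _ _ _ _ hpq
  have e2 : ∫ s in t..(1:ℝ), (periodicGreen t s)^2
      = ∫ s in t..(1:ℝ), (1/4)*((1/(1 - exp 1))^2*Real.exp (2*s + -2*t)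
          + 2*(1/(1 - exp 1))*(exp 1/(1 - exp 1))
          + (exp 1/(1 - exp 1))^2*Real.exp (-2*s + 2*t)) := by
    apply intervalIntegral.integral_congr
    intro s hs
    rw [uIcc_of_le h1] at hs
    have hpq : Real.exp (s-t) * Real.exp (t-s) = 1 := by
      rw [← Real.exp_add]; norm_num
    have h2 : Real.exp (2*s + -2*t) = Real.exp (s-t) * Real.exp (s-t) := by
      rw [← Real.exp_add]; congr 1; ring
    have h3 : Real.exp (-2*s + 2*t) = Real.exp (t-s) * Real.exp (t-s) := by
      rw [← Real.exp_add]; congr 1; ring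
    simp only [periodicGreen, if_pos hs.1]
    rw [h2, h3]
    exact sq_expand _ _ _ _ hpq
  rw [e1, e2, piece (exp 1/(1 - exp 1)) (1/(1 - exp 1)) t t 1,
    piece (1/(1 - exp 1)) (exp 1/(1 - exp 1)) t 0 t]
  have hu : Real.exp t ≠ 0 := (Real.exp_pos t).ne'
  have hE : Real.exp 1 ≠ 0 := (Real.exp_pos 1).ne'
  have hgt : (1:ℝ) < Real.exp 1 := by
    have := Real.exp_one_gt_d9; linarith
  have hE1 : (1:ℝ) - Real.exp 1 ≠ 0 := by linarith
  have hE2 : Real.exp 1 - 1 ≠ 0 := by linarith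
  have r1 : Real.exp (2*t + -2*t) = 1 := by
    rw [show (2*t + -2*t : ℝ) = 0 by ring, Real.exp_zero]
  have r2 : Real.exp (-2*t + 2*t) = 1 := by
    rw [show (-2*t + 2*t : ℝ) = 0 by ring, Real.exp_zero]
  have r3 : Real.exp (2*0 + -2*t) = (Real.exp t * Real.exp t)⁻¹ := by
    rw [show (2*0 + -2*t : ℝ) = -(t+t) by ring, Real.exp_neg, Real.exp_add]
  have r4 : Real.exp (-2*0 + 2*t) = Real.exp t * Real.exp t := by
    rw [show (-2*0 + 2*t : ℝ) = t+t by ring, Real.exp_add]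
  have r5 : Real.exp (2*1 + -2*t) = Real.exp 1 * Real.exp 1 * (Real.exp t * Real.exp t)⁻¹ := by
    rw [show (2*1 + -2*t : ℝ) = (1+1) + -(t+t) by ring, Real.exp_add, Real.exp_neg,
      Real.exp_add, Real.exp_add]
  have r6 : Real.exp (-2*1 + 2*t) = (Real.exp 1 * Real.exp 1)⁻¹ * (Real.exp t * Real.exp t) := by
    rw [show (-2*1 + 2*t : ℝ) = -(1+1) + (t+t) by ring, Real.exp_add, Real.exp_neg,
      Real.exp_add, Real.exp_add]
  rw [r1, r2, r3, r4, r5, r6]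
  generalize hT : Real.exp t = u at hu ⊢
  generalize hO : Real.exp 1 = E at hE hE1 hE2 ⊢
  field_simp
  ring

/-- `sup_{t∈[0,1]} ‖G(t,·)‖_{L²} = √((e² + 2e − 1)/(4(e−1)²))` for the Green's
function of the periodic problem `x''−x=0`. -/
theorem stmt6 :
    (⨆ t : Icc (0:ℝ) 1, Real.sqrt (∫ s in (0:ℝ)..1, (periodicGreen t s) ^ 2)) =
      Real.sqrt (((exp 1) ^ 2 + 2 * exp 1 - 1) / (4 * (exp 1 - 1) ^ 2)) := by
  haveI : Nonempty (Icc (0:ℝ) 1) := ⟨⟨0, by norm_num, by norm_num⟩⟩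
  have h : ∀ t : Icc (0:ℝ) 1,
      Real.sqrt (∫ s in (0:ℝ)..1, (periodicGreen t s) ^ 2)
        = Real.sqrt (((exp 1) ^ 2 + 2 * exp 1 - 1) / (4 * (exp 1 - 1) ^ 2)) := by
    intro t
    rw [green_norm_sq t t.2.1 t.2.2]
  rw [funext h]
  exact ciSup_const
end

section
/- Let E be a Banach space, G: [0,1]² → ℝ such that t ↦ G(t,·) is continuous from [0,1] to L²([0,1],ℝ), let c ∈ L²([0,1],ℝ), m ≥ 0, and suppose m · sup_{t} ‖G(t,·)‖_{L²} < 1. If x ∈ C([0,1],E) satisfies |x(t)| ≤ ∫₀¹ |G(t,s)|(c(s) + m|x(s)|) ds for all t, then ‖x‖_∞ ≤ (sup_t ‖G(t,·)‖_{L²} · ‖c‖_{L²}) / (1 − m · sup_t ‖G(t,·)‖_{L²}). -/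
open Set MeasureTheory intervalIntegral

lemma aux_norm_toLp {α : Type*} {mα : MeasurableSpace α} {μ : Measure α} (f : α → ℝ)
    (hf : MemLp f 2 μ) : ‖hf.toLp f‖ = Real.sqrt (∫ a, f a ^ 2 ∂μ) := by
  have h1 : (inner ℝ (hf.toLp f) (hf.toLp f) : ℝ) = ∫ a, f a ^ 2 ∂μ := by
    rw [L2.inner_def]
    refine integral_congr_ae ?_
    filter_upwards [hf.coeFn_toLp] with a ha
    simp [ha, sq]
  rw [real_inner_self_eq_norm_sq] at h1
  rw [← h1, Real.sqrt_sq (norm_nonneg _)]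

lemma aux_cs {α : Type*} {mα : MeasurableSpace α} {μ : Measure α} (f g : α → ℝ)
    (hf : MemLp f 2 μ) (hg : MemLp g 2 μ) :
    ∫ a, f a * g a ∂μ ≤ ‖hf.toLp f‖ * ‖hg.toLp g‖ := by
  have h1 : (inner ℝ (hf.toLp f) (hg.toLp g) : ℝ) = ∫ a, f a * g a ∂μ := by
    rw [L2.inner_def]
    refine integral_congr_ae ?_
    filter_upwards [hf.coeFn_toLp, hg.coeFn_toLp] with a ha hb
    simp [ha, hb, mul_comm]
  rw [← h1]
  exact real_inner_le_norm _ _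

/-- A priori bound. If `t ↦ G(t,·)` is continuous into `L²`, `c ∈ L²`, `m ≥ 0`,
`m · sup_t ‖G(t,·)‖₂ < 1`, and a continuous `x` satisfies
`|x(t)| ≤ ∫₀¹ |G(t,s)|(c(s)+m|x(s)|) ds`, then
`‖x‖_∞ ≤ sup_t ‖G(t,·)‖₂ · ‖c‖₂ / (1 − m · sup_t ‖G(t,·)‖₂)`. -/
theorem stmt8
    (E : Type*) [NormedAddCommGroup E] [NormedSpace ℝ E]
    (G : ℝ → ℝ → ℝ) (c : ℝ → ℝ) (m : ℝ) (hm : 0 ≤ m)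
    (hGmem : ∀ t, MemLp (fun s => G t s) 2 (volume.restrict (Icc (0:ℝ) 1)))
    (hGcont : Continuous fun t : ℝ => (hGmem t).toLp (fun s => G t s))
    (hc : MemLp c 2 (volume.restrict (Icc (0:ℝ) 1)))
    (K : ℝ) (hK : K = ⨆ t : Icc (0:ℝ) 1, Real.sqrt (∫ s in (0:ℝ)..1, (G (t:ℝ) s) ^ 2))
    (hsmall : m * K < 1)
    (x : ℝ → E) (hxc : ContinuousOn x (Icc (0:ℝ) 1))
    (hineq : ∀ t ∈ Icc (0:ℝ) 1,
      ‖x t‖ ≤ ∫ s in (0:ℝ)..1, |G t s| * (c s + m * ‖x s‖)) :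
    (⨆ t : Icc (0:ℝ) 1, ‖x (t:ℝ)‖) ≤
      K * Real.sqrt (∫ s in (0:ℝ)..1, (c s) ^ 2) / (1 - m * K) := by
  have h01 : (0:ℝ) ≤ 1 := zero_le_one
  set μ := volume.restrict (Icc (0:ℝ) 1) with hμ
  haveI : IsProbabilityMeasure μ := ⟨by simp [hμ, Real.volume_Icc]⟩
  have hconv : ∀ f : ℝ → ℝ, ∫ s in (0:ℝ)..1, f s = ∫ s, f s ∂μ := fun f => by
    rw [intervalIntegral.integral_of_le h01, hμ, ← integral_Icc_eq_integral_Ioc]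
  haveI : Nonempty (Icc (0:ℝ) 1) := ⟨⟨0, by norm_num⟩⟩
  -- bounds on x
  have hxn : ContinuousOn (fun s => ‖x s‖) (Icc (0:ℝ) 1) := hxc.norm
  have hrange : Set.range (fun t : Icc (0:ℝ) 1 => ‖x (t:ℝ)‖) = (fun s => ‖x s‖) '' Icc (0:ℝ) 1 := by
    rw [show (fun t : Icc (0:ℝ) 1 => ‖x (t:ℝ)‖) = (fun s => ‖x s‖) ∘ (Subtype.val) from rfl,
      Set.range_comp, Subtype.range_coe]
  have hbddx : BddAbove (Set.range (fun t : Icc (0:ℝ) 1 => ‖x (t:ℝ)‖)) := by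
    rw [hrange]; exact (isCompact_Icc.image_of_continuousOn hxn).bddAbove
  set M := ⨆ t : Icc (0:ℝ) 1, ‖x (t:ℝ)‖ with hMdef
  have hxM : ∀ s ∈ Icc (0:ℝ) 1, ‖x s‖ ≤ M := fun s hs => le_ciSup hbddx ⟨s, hs⟩
  have hM0 : 0 ≤ M := le_trans (norm_nonneg _) (hxM 0 ⟨le_refl _, h01⟩)
  -- K bounds
  have hGnorm : ∀ t : ℝ, Real.sqrt (∫ s in (0:ℝ)..1, (G t s) ^ 2)
      = ‖(hGmem t).toLp (fun s => G t s)‖ := fun t => by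
    rw [hconv, aux_norm_toLp]
  have hbddK : BddAbove (Set.range (fun t : Icc (0:ℝ) 1 =>
      Real.sqrt (∫ s in (0:ℝ)..1, (G (t:ℝ) s) ^ 2))) := by
    have hcont : Continuous (fun t : Icc (0:ℝ) 1 =>
        ‖(hGmem (t:ℝ)).toLp (fun s => G (t:ℝ) s)‖) :=
      (hGcont.norm).comp continuous_subtype_val
    have : (fun t : Icc (0:ℝ) 1 => Real.sqrt (∫ s in (0:ℝ)..1, (G (t:ℝ) s) ^ 2))
        = fun t : Icc (0:ℝ) 1 => ‖(hGmem (t:ℝ)).toLp (fun s => G (t:ℝ) s)‖ := by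
      funext t; exact hGnorm t
    rw [this]
    exact (isCompact_range hcont).bddAbove
  have hKt : ∀ t ∈ Icc (0:ℝ) 1, Real.sqrt (∫ s in (0:ℝ)..1, (G t s) ^ 2) ≤ K := fun t ht => by
    rw [hK]; exact le_ciSup hbddK ⟨t, ht⟩
  have hK0 : 0 ≤ K := le_trans (Real.sqrt_nonneg _) (hKt 0 ⟨le_refl _, h01⟩)
  -- MemLp facts
  have hxm : AEStronglyMeasurable x μ := hxc.aestronglyMeasurable measurableSet_Icc
  have hx2 : MemLp (fun s => ‖x s‖) 2 μ := by
    refine MemLp.of_bound hxm.norm M ?_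
    filter_upwards [ae_restrict_mem measurableSet_Icc] with s hs
    simpa [abs_of_nonneg (norm_nonneg (x s))] using hxM s hs
  have hmx2 : MemLp (fun s => m * ‖x s‖) 2 μ := hx2.const_mul m
  have hcm : MemLp (fun s => c s + m * ‖x s‖) 2 μ := hc.add hmx2
  have hGabs : ∀ t, MemLp (fun s => |G t s|) 2 μ := fun t => by
    have := (hGmem t).norm
    simpa [Real.norm_eq_abs] using this
  set C := ‖hc.toLp c‖ with hCdef
  have hC0 : 0 ≤ C := norm_nonneg _
  -- L2 norm of ‖x‖ is ≤ M
  have hnx : ‖hx2.toLp _‖ ≤ M := by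
    rw [aux_norm_toLp]
    have hint : ∫ a, ‖x a‖ ^ 2 ∂μ ≤ ∫ _a, M ^ 2 ∂μ := by
      refine integral_mono_ae hx2.integrable_sq (integrable_const _) ?_
      filter_upwards [ae_restrict_mem measurableSet_Icc] with s hs
      exact pow_le_pow_left₀ (norm_nonneg _) (hxM s hs) 2
    have : ∫ _a, M ^ 2 ∂μ = M ^ 2 := by simp
    calc Real.sqrt (∫ a, ‖x a‖ ^ 2 ∂μ) ≤ Real.sqrt (M ^ 2) :=
          Real.sqrt_le_sqrt (le_trans hint (le_of_eq this))
      _ = M := Real.sqrt_sq hM0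
  -- L2 norm of c + m‖x‖
  have hncm : ‖hcm.toLp _‖ ≤ C + m * M := by
    have h1 : hcm.toLp _ = hc.toLp c + hmx2.toLp _ := MemLp.toLp_add hc hmx2
    have h2 : hmx2.toLp _ = m • hx2.toLp _ := MemLp.toLp_const_smul m hx2
    calc ‖hcm.toLp _‖ = ‖hc.toLp c + hmx2.toLp _‖ := by rw [h1]
      _ ≤ ‖hc.toLp c‖ + ‖hmx2.toLp _‖ := norm_add_le _ _
      _ = C + m * ‖hx2.toLp _‖ := by
          rw [h2, norm_smul, Real.norm_eq_abs, abs_of_nonneg hm]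
      _ ≤ C + m * M := by nlinarith
  -- main pointwise bound
  have hmain : ∀ t ∈ Icc (0:ℝ) 1, ‖x t‖ ≤ K * (C + m * M) := fun t ht => by
    have h1 := hineq t ht
    have h2 : ∫ s in (0:ℝ)..1, |G t s| * (c s + m * ‖x s‖)
        = ∫ s, |G t s| * (c s + m * ‖x s‖) ∂μ := hconv _
    have h3 := aux_cs (fun s => |G t s|) (fun s => c s + m * ‖x s‖) (hGabs t) hcm
    have h4 : ‖(hGabs t).toLp _‖ ≤ K := by
      rw [aux_norm_toLp]
      have : ∫ a, |G t a| ^ 2 ∂μ = ∫ a, (G t a) ^ 2 ∂μ := by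
        refine integral_congr_ae (Filter.Eventually.of_forall fun a => ?_)
        simp [sq_abs]
      rw [this, ← hconv]
      exact hKt t ht
    calc ‖x t‖ ≤ ∫ s, |G t s| * (c s + m * ‖x s‖) ∂μ := by rw [← h2]; exact h1
      _ ≤ ‖(hGabs t).toLp _‖ * ‖hcm.toLp _‖ := h3
      _ ≤ K * (C + m * M) := by
          refine mul_le_mul h4 hncm (norm_nonneg _) hK0
  have hMle : M ≤ K * (C + m * M) := ciSup_le fun t => hmain t t.2
  have hCeq : Real.sqrt (∫ s in (0:ℝ)..1, (c s) ^ 2) = C := by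
    rw [hconv, hCdef, aux_norm_toLp]
  rw [hCeq, le_div_iff₀ (by linarith : (0:ℝ) < 1 - m * K)]
  nlinarith
end

section
/- Let E be a Banach space and F: [0,1] × E → (nonempty closed bounded subsets of E) satisfy: d_H(F(t,x), F(t,y)) ≤ μ(t)|x−y| for all x,y ∈ E and a.e. t, with μ ∈ L¹([0,1],ℝ); and d(0, F(t,0)) ≤ α(t) a.e. with α ∈ L¹. Let h ∈ C([0,1],E), G ∈ C([0,1]²,ℝ), and H(w)(t) = ∫₀¹ G(t,s)w(s) ds. Define Φ: L¹([0,1],E) ⊸ L¹([0,1],E) by Φ(u) = {w ∈ L¹ : w(t) ∈ F(t, h(t) + H(u)(t)) a.e.}. Then for all u₁, u₂ ∈ L¹([0,1],E), d_{L¹}(Φ(u₁), Φ(u₂)) ≤ ‖μ‖_{L¹} · (sup_{(t,s)} |G(t,s)|) · ‖u₁ − u₂‖_{L¹}. In particular, if ‖μ‖_{L¹} · sup_{(t,s)}|G(t,s)| < 1 then Φ is a multivalued contraction. -/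
open Set MeasureTheory intervalIntegral Metric Filter Topology Function

namespace Stmt9Aux

lemma cap_compact {μ : MeasureTheory.Measure ℝ} [IsFiniteMeasure μ] (f : (ℕ → ℕ) → ℝ)
    (hf : Continuous f) {ε : ENNReal} (hε : ε ≠ 0) :
    ∃ K : Set ℝ, IsCompact K ∧ K ⊆ range f ∧ μ (range f) ≤ μ K + ε := by
  classical
  set C : (ℕ → ℕ) → ℕ → Set (ℕ → ℕ) := fun σ k => {x | ∀ i < k, x i ≤ σ i} with hCdef
  have hCprefix : ∀ (g g' : ℕ → ℕ) (k : ℕ), (∀ i < k, g i = g' i) → C g k = C g' k := by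
    intro g g' k hgg'
    ext x
    constructor <;> intro hx i hi
    · rw [← hgg' i hi]; exact hx i hi
    · rw [hgg' i hi]; exact hx i hi
  have hμfin : μ (range f) ≠ ⊤ := measure_ne_top μ _
  have hstep : ∀ (k : ℕ) (g : ℕ → ℕ), μ (range f) < μ (f '' C g k) + ε →
      ∃ m, μ (range f) < μ (f '' C (Function.update g k m) (k + 1)) + ε := by
    intro k g hg
    have hun : (⋃ m, (C g k ∩ {x | x k ≤ m})) = C g k := by
      ext x
      simp only [mem_iUnion, mem_inter_iff, mem_setOf_eq]
      exact ⟨fun ⟨m, hm, _⟩ => hm, fun hx => ⟨x k, hx, le_rfl⟩⟩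
    have hmono : Monotone fun m => f '' (C g k ∩ {x | x k ≤ m}) := by
      intro a b hab
      exact image_mono (inter_subset_inter_right _ fun x hx => le_trans hx hab)
    have hsup : μ (f '' C g k) = ⨆ m, μ (f '' (C g k ∩ {x | x k ≤ m})) := by
      conv_lhs => rw [← hun, image_iUnion]
      exact hmono.measure_iUnion
    rw [hsup, ENNReal.iSup_add] at hg
    obtain ⟨m, hm⟩ := lt_iSup_iff.1 hg
    refine ⟨m, lt_of_lt_of_le hm ?_⟩
    gcongr
    intro x hx
    intro i hi
    rcases Nat.lt_succ_iff_lt_or_eq.1 hi with hi' | rfl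
    · rw [Function.update_of_ne hi'.ne]; exact hx.1 i hi'
    · rw [Function.update_self]; exact hx.2
  have hbase : μ (range f) < μ (f '' C (fun _ => 0) 0) + ε := by
    have h0 : C (fun _ => 0) 0 = univ := by
      ext x; simp [hCdef]
    rw [h0, image_univ]
    exact ENNReal.lt_add_right hμfin hε
  let T : (k : ℕ) → {g : ℕ → ℕ // μ (range f) < μ (f '' C g k) + ε} := fun k =>
    Nat.rec ⟨fun _ => 0, hbase⟩
      (fun k ih => ⟨Function.update ih.1 k (hstep k ih.1 ih.2).choose,
        (hstep k ih.1 ih.2).choose_spec⟩) k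
  have hTsucc : ∀ k, (T (k + 1)).1 =
      Function.update (T k).1 k (hstep k (T k).1 (T k).2).choose := fun _ => rfl
  set σ : ℕ → ℕ := fun k => (T (k + 1)).1 k with hσdef
  have hpre : ∀ k i, i < k → (T k).1 i = σ i := by
    intro k
    induction k with
    | zero => intro i hi; omega
    | succ k ih =>
      intro i hi
      rcases Nat.lt_succ_iff_lt_or_eq.1 hi with hi' | rfl
      · rw [hTsucc k, Function.update_of_ne hi'.ne, ih i hi']
      · rfl
  have hinv : ∀ k, μ (range f) < μ (f '' C σ k) + ε := by
    intro k
    have h := (T k).2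
    rwa [hCprefix (T k).1 σ k fun i hi => hpre k i hi] at h
  set L : Set (ℕ → ℕ) := Set.pi univ fun i => Iic (σ i) with hLdef
  have hL : IsCompact L := isCompact_univ_pi fun i => (Set.finite_Iic _).isCompact
  refine ⟨f '' L, hL.image hf, image_subset_range _ _, ?_⟩
  set D : ℕ → Set ℝ := fun k => closure (f '' C σ k) with hDdef
  have hDanti : Antitone D := by
    intro a b hab
    refine closure_mono (image_mono fun x hx i hi => hx i (lt_of_lt_of_le hi hab))
  -- the key inclusion
  have hincl : (⋂ k, D k) ⊆ f '' L := by
    intro y hy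
    have hy' : ∀ k : ℕ, ∃ z ∈ C σ k, dist y (f z) < 1 / (k + 1) := by
      intro k
      have hyk : y ∈ closure (f '' C σ k) := mem_iInter.1 hy k
      rcases Metric.mem_closure_iff.1 hyk (1 / (k + 1)) (by positivity) with ⟨b, hb, hbd⟩
      rcases hb with ⟨z, hz, rfl⟩
      exact ⟨z, hz, hbd⟩
    choose x hxC hxd using hy'
    have hxL' : ∀ k, x k ∈ Set.pi univ fun i =>
        Iic (max (σ i) ((Finset.range (i + 1)).sup fun j => x j i)) := by
      intro k i _
      simp only [mem_Iic]
      rcases lt_or_ge i k with hik | hik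
      · exact le_max_of_le_left (hxC k i hik)
      · exact le_max_of_le_right (Finset.le_sup (f := fun j => x j i) (Finset.mem_range.2 (Nat.lt_succ_of_le hik)))
    have hL' : IsCompact (Set.pi univ fun i =>
        Iic (max (σ i) ((Finset.range (i + 1)).sup fun j => x j i))) :=
      isCompact_univ_pi fun i => (Set.finite_Iic _).isCompact
    obtain ⟨a, -, hacl⟩ := hL'.exists_mapClusterPt (f := atTop) (u := x)
      (by rw [Filter.le_principal_iff, Filter.mem_map]
          exact Filter.univ_mem' hxL')
    have haL : a ∈ L := by
      intro i _
      simp only [mem_Iic]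
      have h1 : MapClusterPt (a i) atTop fun k => x k i :=
        hacl.continuousAt_comp (continuous_apply i).continuousAt
      have h2 : ∃ᶠ k in atTop, x k i = a i := by
        have := mapClusterPt_iff_frequently.1 h1 {a i} (by simp [nhds_discrete])
        simpa [eq_comm] using this
      obtain ⟨k, hk1, hk2⟩ := (h2.and_eventually (eventually_gt_atTop i)).exists
      calc a i = x k i := hk1.symm
        _ ≤ σ i := hxC k i hk2
    have htd : Tendsto (f ∘ x) atTop (𝓝 y) := by
      have hsq : Tendsto (fun k : ℕ => dist (f (x k)) y) atTop (𝓝 0) := by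
        refine squeeze_zero (fun k => dist_nonneg) (fun k => ?_)
          tendsto_one_div_add_atTop_nhds_zero_nat
        rw [dist_comm]
        exact (hxd k).le
      exact tendsto_iff_dist_tendsto_zero.2 hsq
    have hfa : f a = y := by
      have h1 : MapClusterPt (f a) atTop (f ∘ x) := hacl.continuousAt_comp hf.continuousAt
      have h2 : ClusterPt (f a) (𝓝 y) := h1.clusterPt.mono htd
      exact eq_of_nhds_neBot h2
    exact ⟨a, haL, hfa⟩
  -- measure estimate
  have hmeas : ∀ k, μ (range f) ≤ μ (D k) + ε := by
    intro k
    exact le_of_lt (lt_of_lt_of_le (hinv k)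
      (add_le_add (measure_mono subset_closure) le_rfl))
  have hiInter : μ (⋂ k, D k) = ⨅ k, μ (D k) :=
    hDanti.directed_ge.measure_iInter (fun k => isClosed_closure.nullMeasurableSet)
      ⟨0, measure_ne_top μ _⟩
  calc μ (range f) ≤ ⨅ k, (μ (D k) + ε) := le_iInf hmeas
    _ = (⨅ k, μ (D k)) + ε := (ENNReal.iInf_add).symm
    _ = μ (⋂ k, D k) + ε := by rw [hiInter]
    _ ≤ μ (f '' L) + ε := add_le_add (measure_mono hincl) le_rfl

lemma analyticSet_nullMeasurableSet {μ : MeasureTheory.Measure ℝ} [IsFiniteMeasure μ] {A : Set ℝ}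
    (hA : MeasureTheory.AnalyticSet A) : NullMeasurableSet A μ := by
  rw [MeasureTheory.AnalyticSet_def] at hA
  rcases hA with rfl | ⟨f, hf, rfl⟩
  · exact MeasurableSet.empty.nullMeasurableSet
  · have hK : ∀ n : ℕ, ∃ K : Set ℝ, IsCompact K ∧ K ⊆ range f ∧
        μ (range f) ≤ μ K + ((n : ENNReal) + 1)⁻¹ := by
      intro n
      refine cap_compact f hf ?_
      simp [ENNReal.inv_ne_zero]
    choose K hKc hKsub hKle using hK
    set S := ⋃ n, K n with hSdef
    have hSmeas : MeasurableSet S :=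
      MeasurableSet.iUnion fun n => (hKc n).isClosed.measurableSet
    have hSsub : S ⊆ range f := iUnion_subset hKsub
    have hSm : μ (range f) ≤ μ S := by
      refine ENNReal.le_of_forall_pos_le_add fun ε hε _ => ?_
      obtain ⟨n, hn⟩ := ENNReal.exists_inv_nat_lt (a := (ε : ENNReal))
        (by exact_mod_cast hε.ne')
      calc μ (range f) ≤ μ (K n) + ((n : ENNReal) + 1)⁻¹ := hKle n
        _ ≤ μ S + (ε : ENNReal) :=
            add_le_add (measure_mono (subset_iUnion K n))
              (le_trans (ENNReal.inv_le_inv.2 le_self_add) hn.le)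
    have hnull : μ (range f \ S) = 0 := by
      have hT := subset_toMeasurable μ (range f)
      have h2 : μ (toMeasurable μ (range f) \ S) = μ (toMeasurable μ (range f)) - μ S :=
        measure_diff (hSsub.trans hT) hSmeas.nullMeasurableSet (measure_ne_top μ _)
      have h3 : μ (toMeasurable μ (range f)) ≤ μ S := by
        rw [measure_toMeasurable]; exact hSm
      refine measure_mono_null (diff_subset_diff_left hT) ?_
      rw [h2, tsub_eq_zero_of_le h3]
    have hrw : range f = S ∪ (range f \ S) := (union_diff_cancel hSsub).symm
    rw [hrw]
    exact hSmeas.nullMeasurableSet.union (NullMeasurableSet.of_null hnull)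

lemma proj_nullMeasurable {E : Type*} [NormedAddCommGroup E] [MeasurableSpace E] [BorelSpace E]
    [SecondCountableTopology E] [CompleteSpace E]
    {μ : MeasureTheory.Measure ℝ} [IsFiniteMeasure μ] {Γ : Set (ℝ × E)}
    (hΓ : MeasurableSet Γ) : NullMeasurableSet (Prod.fst '' Γ) μ :=
  analyticSet_nullMeasurableSet ((hΓ.analyticSet).image_of_continuous continuous_fst)

lemma find_meas {μ : MeasureTheory.Measure ℝ} (A : ℕ → Set ℝ)
    (hA : ∀ j, NullMeasurableSet (A j) μ) (hex : ∀ᵐ t ∂μ, ∃ j, t ∈ A j) :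
    ∃ g : ℝ → ℕ, Measurable g ∧ ∀ᵐ t ∂μ, t ∈ A (g t) := by
  classical
  have hB : ∀ j, ∃ B : Set ℝ, MeasurableSet B ∧ B =ᵐ[μ] A j := by
    intro j
    obtain ⟨B, _, hBmeas, hBae⟩ := (hA j).exists_measurable_subset_ae_eq
    exact ⟨B, hBmeas, hBae⟩
  choose B hBmeas hBae using hB
  refine ⟨fun t => if h : ∃ j, t ∈ B j then Nat.find h else 0, ?_, ?_⟩
  · refine measurable_to_countable' fun n => ?_
    have hrw : {x | (if h : ∃ j, x ∈ B j then Nat.find h else 0) = n}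
        = (B n ∩ ⋂ i ∈ Finset.range n, (B i)ᶜ) ∪
          (if n = 0 then (⋂ j, (B j)ᶜ) else ∅) := by
      ext t
      by_cases h : ∃ j, t ∈ B j
      · simp only [mem_setOf_eq, dif_pos h, Nat.find_eq_iff h, mem_union, mem_inter_iff,
          Finset.mem_range, mem_iInter, mem_compl_iff]
        constructor
        · rintro ⟨h1, h2⟩
          exact Or.inl ⟨h1, fun i hi => h2 i hi⟩
        · rintro (⟨h1, h2⟩ | hbad)
          · exact ⟨h1, fun i hi => h2 i hi⟩
          · rcases h with ⟨j, hj⟩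
            by_cases hn : n = 0
            · rw [if_pos hn] at hbad
              exact absurd hj (mem_iInter.1 hbad j)
            · rw [if_neg hn] at hbad
              exact absurd hbad (notMem_empty t)
      · simp only [mem_setOf_eq, dif_neg h, mem_union, mem_inter_iff]
        push_neg at h
        constructor
        · rintro rfl
          right
          rw [if_pos rfl]
          exact mem_iInter.2 fun j => h j
        · rintro (⟨h1, _⟩ | hbad)
          · exact absurd h1 (h n)
          · by_cases hn : n = 0
            · exact hn.symm
            · rw [if_neg hn] at hbad
              exact absurd hbad (notMem_empty t)
    have : (fun t => if h : ∃ j, t ∈ B j then Nat.find h else 0) ⁻¹' {n}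
        = {x | (if h : ∃ j, x ∈ B j then Nat.find h else 0) = n} := rfl
    rw [this, hrw]
    refine (((hBmeas n).inter (MeasurableSet.biInter (Finset.range n).countable_toSet
      fun i _ => (hBmeas i).compl)).union ?_)
    split
    · exact MeasurableSet.iInter fun j => (hBmeas j).compl
    · exact MeasurableSet.empty
  · have hBA : ∀ᵐ t ∂μ, ∀ j, (t ∈ B j ↔ t ∈ A j) := by
      rw [ae_all_iff]
      intro j
      exact eventuallyEq_set.1 (hBae j)
    filter_upwards [hBA, hex] with t hBAt hext
    rcases hext with ⟨j, hj⟩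
    have hBj : t ∈ B j := (hBAt j).2 hj
    have hEx : ∃ j, t ∈ B j := ⟨j, hBj⟩
    rw [dif_pos hEx]
    exact (hBAt _).1 (Nat.find_spec hEx)

lemma SEL {E : Type*} [NormedAddCommGroup E] [NormedSpace ℝ E] [CompleteSpace E]
    [MeasurableSpace E] [BorelSpace E] [SecondCountableTopology E]
    (μ : MeasureTheory.Measure ℝ) [IsFiniteMeasure μ]
    (S : ℝ → Set E) (hScl : ∀ t, IsClosed (S t)) (hSne : ∀ t, (S t).Nonempty)
    (hSmeas : ∀ (e : E) (q : ℝ), NullMeasurableSet {t | infDist e (S t) < q} μ)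
    (w : ℝ → E) (hw : AEStronglyMeasurable w μ)
    (ρ : ℝ → ℝ) (hρ : AEMeasurable ρ μ)
    (hd : ∀ᵐ t ∂μ, infDist (w t) (S t) ≤ ρ t)
    {ε : ℝ} (hε : 0 < ε) :
    ∃ v : ℝ → E, AEStronglyMeasurable v μ ∧
      ∀ᵐ t ∂μ, v t ∈ S t ∧ dist (w t) (v t) ≤ ρ t + ε := by
  classical
  have hne : Nonempty E := ⟨(hSne 0).some⟩
  set e : ℕ → E := TopologicalSpace.denseSeq E with hedef
  have hedense : DenseRange e := TopologicalSpace.denseRange_denseSeq E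
  set w' := hw.mk w with hw'def
  have hw'meas : Measurable w' := hw.stronglyMeasurable_mk.measurable
  have hw'ae : w =ᵐ[μ] w' := hw.ae_eq_mk
  set ρ' := hρ.mk ρ with hρ'def
  have hρ'meas : Measurable ρ' := hρ.measurable_mk
  have hρ'ae : ρ =ᵐ[μ] ρ' := hρ.ae_eq_mk
  set δ : ℕ → ℝ := fun k => ε / 2 ^ (k + 5) with hδdef
  have hδpos : ∀ k, 0 < δ k := fun k => by positivity
  set η : ℕ → ℝ := fun k => ε / 2 - ε / 2 ^ (k + 2) with hηdef
  have hηε : ∀ k, η k ≤ ε / 2 := by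
    intro k
    have h1 : (0:ℝ) < ε / 2 ^ (k + 2) := by positivity
    simp only [hηdef]
    linarith
  have hηstep : ∀ k, η k + (δ k + δ (k + 1)) ≤ η (k + 1) := by
    intro k
    have hq : (0:ℝ) ≤ ε / 2 ^ k := by positivity
    have e1 : ε / 2 ^ (k + 5) = ε / 2 ^ k / 32 := by
      rw [pow_add, div_mul_eq_div_div]; norm_num
    have e2 : ε / 2 ^ (k + 1 + 5) = ε / 2 ^ k / 64 := by
      rw [show k + 1 + 5 = k + 6 by ring, pow_add, div_mul_eq_div_div]; norm_num
    have e3 : ε / 2 ^ (k + 2) = ε / 2 ^ k / 4 := by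
      rw [pow_add, div_mul_eq_div_div]; norm_num
    have e4 : ε / 2 ^ (k + 1 + 2) = ε / 2 ^ k / 8 := by
      rw [show k + 1 + 2 = k + 3 by ring, pow_add, div_mul_eq_div_div]; norm_num
    simp only [hηdef, hδdef]
    rw [e1, e2, e3, e4]
    linarith
  have hd' : ∀ᵐ t ∂μ, infDist (w' t) (S t) ≤ ρ' t := by
    filter_upwards [hd, hw'ae, hρ'ae] with t h1 h2 h3
    rw [← h2, ← h3]; exact h1
  set Inv : ℕ → (ℝ → E) → Prop := fun k v =>
    ∀ᵐ t ∂μ, infDist (v t) (S t) < δ k ∧ dist (w' t) (v t) < ρ' t + η k with hInvdef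
  have hbase : ∃ v : ℝ → E, Measurable v ∧ Inv 0 v := by
    have hA : ∀ j : ℕ, NullMeasurableSet
        {t | dist (e j) (w' t) < ρ' t + η 0 ∧ infDist (e j) (S t) < δ 0} μ := by
      intro j
      have h1 : MeasurableSet {t | dist (e j) (w' t) < ρ' t + η 0} :=
        measurableSet_lt (measurable_const.dist hw'meas) (hρ'meas.add_const _)
      exact (setOf_and (p := fun t => dist (e j) (w' t) < ρ' t + η 0)
        (q := fun t => infDist (e j) (S t) < δ 0) ▸
          h1.nullMeasurableSet.inter (hSmeas (e j) (δ 0)))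
    have hex : ∀ᵐ t ∂μ, ∃ j : ℕ,
        dist (e j) (w' t) < ρ' t + η 0 ∧ infDist (e j) (S t) < δ 0 := by
      filter_upwards [hd'] with t ht
      have h8 : (0:ℝ) < ε / 8 := by positivity
      have h1 : infDist (w' t) (S t) < ρ' t + ε / 8 := lt_of_le_of_lt ht (by linarith)
      obtain ⟨z, hzS, hz⟩ := (infDist_lt_iff (hSne t)).1 h1
      obtain ⟨j, hj⟩ := Metric.denseRange_iff.1 hedense z (min (δ 0) (ε / 8))
        (lt_min (hδpos 0) h8)
      have hj1 : dist z (e j) < δ 0 := lt_of_lt_of_le hj (min_le_left _ _)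
      have hj2 : dist z (e j) < ε / 8 := lt_of_lt_of_le hj (min_le_right _ _)
      have hη0 : η 0 = ε / 2 - ε / 4 := by norm_num [hηdef]
      refine ⟨j, ?_, ?_⟩
      · have htri : dist (e j) (w' t) ≤ dist (e j) z + dist z (w' t) := dist_triangle _ _ _
        rw [dist_comm (e j) z, dist_comm z (w' t)] at htri
        rw [hη0]
        linarith
      · exact lt_of_le_of_lt (infDist_le_dist_of_mem hzS) (by rw [dist_comm]; exact hj1)
    obtain ⟨g, hg, hgae⟩ := find_meas _ hA hex
    refine ⟨fun t => e (g t), (measurable_of_countable e).comp hg, ?_⟩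
    filter_upwards [hgae] with t ht
    exact ⟨ht.2, by rw [dist_comm]; exact ht.1⟩
  have hstep : ∀ (k : ℕ) (v : ℝ → E), Measurable v → Inv k v →
      ∃ v' : ℝ → E, Measurable v' ∧ Inv (k + 1) v' ∧
        ∀ᵐ t ∂μ, dist (v' t) (v t) < δ k + δ (k + 1) := by
    intro k v hv hInvk
    have hA : ∀ j : ℕ, NullMeasurableSet
        {t | (dist (e j) (v t) < δ k + δ (k + 1) ∧ dist (e j) (w' t) < ρ' t + η (k + 1))
          ∧ infDist (e j) (S t) < δ (k + 1)} μ := by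
      intro j
      have h1 : MeasurableSet {t | dist (e j) (v t) < δ k + δ (k + 1) ∧
          dist (e j) (w' t) < ρ' t + η (k + 1)} := by
        refine MeasurableSet.inter ?_ ?_
        · exact measurableSet_lt (measurable_const.dist hv) measurable_const
        · exact measurableSet_lt (measurable_const.dist hw'meas) (hρ'meas.add_const _)
      exact (setOf_and (p := fun t => dist (e j) (v t) < δ k + δ (k + 1) ∧
          dist (e j) (w' t) < ρ' t + η (k + 1))
        (q := fun t => infDist (e j) (S t) < δ (k + 1)) ▸
          h1.nullMeasurableSet.inter (hSmeas (e j) (δ (k + 1))))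
    have hex : ∀ᵐ t ∂μ, ∃ j : ℕ,
        (dist (e j) (v t) < δ k + δ (k + 1) ∧ dist (e j) (w' t) < ρ' t + η (k + 1))
          ∧ infDist (e j) (S t) < δ (k + 1) := by
      filter_upwards [hInvk] with t ht
      obtain ⟨ht1, ht2⟩ := ht
      obtain ⟨z, hzS, hz⟩ := (infDist_lt_iff (hSne t)).1 ht1
      obtain ⟨j, hj⟩ := Metric.denseRange_iff.1 hedense z (δ (k + 1)) (hδpos _)
      have hstep' := hηstep k
      refine ⟨j, ⟨?_, ?_⟩, ?_⟩
      · have htri : dist (e j) (v t) ≤ dist (e j) z + dist z (v t) := dist_triangle _ _ _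
        rw [dist_comm (e j) z, dist_comm z (v t)] at htri
        linarith
      · have htri : dist (e j) (w' t) ≤ dist (e j) z + (dist z (v t) + dist (v t) (w' t)) :=
          le_trans (dist_triangle _ _ _) (by gcongr; exact dist_triangle _ _ _)
        rw [dist_comm (e j) z, dist_comm z (v t), dist_comm (v t) (w' t)] at htri
        linarith
      · exact lt_of_le_of_lt (infDist_le_dist_of_mem hzS) (by rw [dist_comm]; exact hj)
    obtain ⟨g, hg, hgae⟩ := find_meas _ hA hex
    refine ⟨fun t => e (g t), (measurable_of_countable e).comp hg, ?_, ?_⟩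
    · filter_upwards [hgae] with t ht
      exact ⟨ht.2, by rw [dist_comm]; exact ht.1.2⟩
    · filter_upwards [hgae] with t ht
      exact ht.1.1
  let T : (k : ℕ) → {v : ℝ → E // Measurable v ∧ Inv k v} := fun k =>
    Nat.rec ⟨hbase.choose, hbase.choose_spec⟩
      (fun k ih => ⟨(hstep k ih.1 ih.2.1 ih.2.2).choose,
        (hstep k ih.1 ih.2.1 ih.2.2).choose_spec.1,
        (hstep k ih.1 ih.2.1 ih.2.2).choose_spec.2.1⟩) k
  have hTd : ∀ k, ∀ᵐ t ∂μ, dist ((T (k + 1)).1 t) ((T k).1 t) < δ k + δ (k + 1) :=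
    fun k => (hstep k (T k).1 (T k).2.1 (T k).2.2).choose_spec.2.2
  set vs : ℕ → ℝ → E := fun k => (T k).1 with hvs
  have hvsmeas : ∀ k, Measurable (vs k) := fun k => (T k).2.1
  have hΩ : ∀ᵐ t ∂μ,
      (∀ k, infDist (vs k t) (S t) < δ k ∧ dist (w' t) (vs k t) < ρ' t + η k)
      ∧ (∀ k, dist (vs (k + 1) t) (vs k t) < δ k + δ (k + 1)) := by
    refine Filter.Eventually.and ?_ ?_
    · rw [MeasureTheory.ae_all_iff]; exact fun k => (T k).2.2
    · rw [MeasureTheory.ae_all_iff]; exact hTd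
  have hgeo : ∀ n, δ n + δ (n + 1) ≤ ε / 16 * (1 / 2) ^ n := by
    intro n
    have hq : (0:ℝ) ≤ ε / 2 ^ n := by positivity
    have e1 : ε / 2 ^ (n + 5) = ε / 2 ^ n / 32 := by
      rw [pow_add, div_mul_eq_div_div]; norm_num
    have e2 : ε / 2 ^ (n + 1 + 5) = ε / 2 ^ n / 64 := by
      rw [show n + 1 + 5 = n + 6 by ring, pow_add, div_mul_eq_div_div]; norm_num
    have e5 : ε / 16 * (1 / 2 : ℝ) ^ n = ε / 2 ^ n / 16 := by
      rw [div_pow, one_pow]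
      ring
    simp only [hδdef]
    rw [e1, e2, e5]
    linarith
  have hCau : ∀ t, (∀ k, dist (vs (k + 1) t) (vs k t) < δ k + δ (k + 1)) →
      ∃ L, Tendsto (fun k => vs k t) atTop (𝓝 L) := by
    intro t ht
    have hc : CauchySeq fun k => vs k t := by
      refine cauchySeq_of_le_geometric (1 / 2 : ℝ) (ε / 16) (by norm_num) fun n => ?_
      have h1 := (ht n).le
      rw [dist_comm] at h1
      exact le_trans h1 (hgeo n)
    exact cauchySeq_tendsto_of_complete hc
  set v : ℝ → E := fun t =>
    if h : ∃ L, Tendsto (fun k => vs k t) atTop (𝓝 L) then h.choose else e 0 with hvdef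
  have hvtend : ∀ t, (∃ L, Tendsto (fun k => vs k t) atTop (𝓝 L)) →
      Tendsto (fun k => vs k t) atTop (𝓝 (v t)) := by
    intro t h
    have : v t = h.choose := by rw [hvdef]; exact dif_pos h
    rw [this]
    exact h.choose_spec
  have htendae : ∀ᵐ t ∂μ, Tendsto (fun k => vs k t) atTop (𝓝 (v t)) := by
    filter_upwards [hΩ] with t ht
    exact hvtend t (hCau t ht.2)
  have hvmeas : AEStronglyMeasurable v μ :=
    (aemeasurable_of_tendsto_metrizable_ae atTop (fun k => (hvsmeas k).aemeasurable)
      htendae).aestronglyMeasurable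
  refine ⟨v, hvmeas, ?_⟩
  have hδlim : Tendsto δ atTop (𝓝 0) := by
    have h2 : Tendsto (fun k : ℕ => (ε / 32) * (1 / 2 : ℝ) ^ k) atTop (𝓝 ((ε / 32) * 0)) :=
      (tendsto_pow_atTop_nhds_zero_of_lt_one (by norm_num) (by norm_num)).const_mul _
    rw [mul_zero] at h2
    refine h2.congr fun k => ?_
    simp only [hδdef, pow_add, div_pow, one_pow]
    ring
  filter_upwards [hΩ, htendae, hw'ae, hρ'ae] with t ht htt hwt hρt
  obtain ⟨ht1, _⟩ := ht
  have hdist0 : Tendsto (fun k => dist (v t) (vs k t)) atTop (𝓝 0) := by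
    have := (htt.dist (tendsto_const_nhds (x := v t)))
    simpa [dist_comm] using this
  have hmem : v t ∈ S t := by
    have hle : ∀ k, infDist (v t) (S t) ≤ δ k + dist (v t) (vs k t) := by
      intro k
      refine le_trans (infDist_le_infDist_add_dist (y := vs k t)) ?_
      exact add_le_add (ht1 k).1.le le_rfl
    have hlim : Tendsto (fun k => δ k + dist (v t) (vs k t)) atTop (𝓝 (0 + 0)) :=
      hδlim.add hdist0
    rw [add_zero] at hlim
    have h0 : infDist (v t) (S t) ≤ 0 := ge_of_tendsto' hlim hle
    have := le_antisymm h0 infDist_nonneg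
    exact ((hScl t).mem_iff_infDist_zero (hSne t)).2 this
  have hdist : dist (w' t) (v t) ≤ ρ' t + ε / 2 := by
    have hl : Tendsto (fun k => dist (w' t) (vs k t)) atTop (𝓝 (dist (w' t) (v t))) :=
      tendsto_const_nhds.dist htt
    refine le_of_tendsto hl (Filter.Eventually.of_forall fun k => ?_)
    exact le_trans (ht1 k).2.le (by have := hηε k; linarith)
  refine ⟨hmem, ?_⟩
  rw [hwt, hρt]
  linarith
lemma exists_step {E : Type*} [NormedAddCommGroup E] [MeasurableSpace E]
    (x : ℝ → E) (hx : ContinuousOn x (Icc (0:ℝ) 1)) {η : ℝ} (hη : 0 < η) :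
    ∃ z : ℝ → E, Measurable z ∧ (range z).Countable ∧
      ∀ t ∈ Icc (0:ℝ) 1, ‖z t - x t‖ ≤ η := by
  have huc : UniformContinuousOn x (Icc 0 1) :=
    isCompact_Icc.uniformContinuousOn_of_continuous hx
  rw [Metric.uniformContinuousOn_iff] at huc
  obtain ⟨δ, hδ, hucd⟩ := huc η hη
  obtain ⟨n, hn⟩ := exists_nat_one_div_lt (K := ℝ) hδ
  set m : ℝ := (n : ℝ) + 1 with hm
  have hm0 : (0:ℝ) < m := by positivity
  refine ⟨fun t => x ((⌊t * m⌋ : ℝ) / m), ?_, ?_, ?_⟩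
  · have h1 : Measurable fun t : ℝ => ⌊t * m⌋ :=
      Int.measurable_floor.comp (measurable_id.mul_const m)
    exact (measurable_of_countable fun i : ℤ => x ((i : ℝ) / m)).comp h1
  · have hsub : range (fun t => x ((⌊t * m⌋ : ℝ) / m)) ⊆
        range fun i : ℤ => x ((i : ℝ) / m) := by
      rintro _ ⟨t, rfl⟩; exact ⟨⌊t * m⌋, rfl⟩
    exact (countable_range _).mono hsub
  · intro t ht
    have h1 : (0:ℝ) ≤ (⌊t * m⌋ : ℝ) := by
      have h0 : (0:ℝ) ≤ t * m := mul_nonneg ht.1 hm0.le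
      exact_mod_cast Int.floor_nonneg.2 h0
    have h2 : (⌊t * m⌋ : ℝ) ≤ m := by
      have h3 : t * m ≤ m := by nlinarith [ht.2, hm0]
      exact le_trans (Int.floor_le _) h3
    have hrt : (⌊t * m⌋ : ℝ) / m ∈ Icc (0:ℝ) 1 :=
      ⟨div_nonneg h1 hm0.le, (div_le_one hm0).2 h2⟩
    have hfl1 : (⌊t * m⌋ : ℝ) / m ≤ t := by
      rw [div_le_iff₀ hm0]; exact Int.floor_le _
    have hfl2 : t < (⌊t * m⌋ : ℝ) / m + 1 / m := by
      rw [← add_div, lt_div_iff₀ hm0]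
      exact_mod_cast Int.lt_floor_add_one (t * m)
    have hdist : dist ((⌊t * m⌋ : ℝ) / m) t < δ := by
      rw [Real.dist_eq, abs_sub_comm, abs_of_nonneg (by linarith)]
      have : 1 / m < δ := hn
      linarith
    have := hucd _ hrt t ht hdist
    rw [← dist_eq_norm]
    exact this.le

lemma hit_nullmeas {E : Type*} [NormedAddCommGroup E] [NormedSpace ℝ E] [CompleteSpace E]
    [MeasurableSpace E] [BorelSpace E] [SecondCountableTopology E]
    {μ : MeasureTheory.Measure ℝ} [IsFiniteMeasure μ]
    (F : ℝ → E → Set E) (hFne : ∀ t x, (F t x).Nonempty)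
    (hFmeas : ∀ x : E, MeasurableSet {p : ℝ × E | p.2 ∈ F p.1 x})
    (z : ℝ → E) (hz : Measurable z) (hzc : (range z).Countable) (e : E) (q : ℝ) :
    NullMeasurableSet {t | infDist e (F t (z t)) < q} μ := by
  have hconst : ∀ x : E, NullMeasurableSet {t | infDist e (F t x) < q} μ := by
    intro x
    have hrw : {t | infDist e (F t x) < q} =
        Prod.fst '' ({p : ℝ × E | p.2 ∈ F p.1 x} ∩ (univ ×ˢ Metric.ball e q)) := by
      ext t
      simp only [mem_setOf_eq, mem_image, mem_inter_iff, mem_prod, mem_univ, true_and,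
        Metric.mem_ball, Prod.exists]
      constructor
      · intro ht
        obtain ⟨y, hyF, hy⟩ := (infDist_lt_iff (hFne t x)).1 ht
        exact ⟨t, y, ⟨hyF, by rwa [dist_comm]⟩, rfl⟩
      · rintro ⟨t', y, ⟨hyF, hy⟩, rfl⟩
        exact lt_of_le_of_lt (infDist_le_dist_of_mem hyF) (by rwa [dist_comm])
    rw [hrw]
    exact proj_nullMeasurable ((hFmeas x).inter (MeasurableSet.univ.prod measurableSet_ball))
  have hzc' : Countable ↥(range z) := hzc.to_subtype
  have hdecomp : {t | infDist e (F t (z t)) < q} =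
      ⋃ x : range z, (z ⁻¹' {(x : E)}) ∩ {t | infDist e (F t (x : E)) < q} := by
    ext t
    simp only [mem_setOf_eq, mem_iUnion, mem_inter_iff, mem_preimage, mem_singleton_iff]
    constructor
    · intro ht
      exact ⟨⟨z t, mem_range_self t⟩, rfl, ht⟩
    · rintro ⟨x, h1, h2⟩
      rw [h1]; exact h2
  rw [hdecomp]
  exact NullMeasurableSet.iUnion fun x =>
    (hz (measurableSet_singleton _)).nullMeasurableSet.inter (hconst x)

lemma cont_int {E : Type*} [NormedAddCommGroup E] [NormedSpace ℝ E] [CompleteSpace E]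
    [MeasurableSpace E] [BorelSpace E] [SecondCountableTopology E]
    (G : ℝ → ℝ → ℝ) (hG : Continuous fun p : ℝ × ℝ => G p.1 p.2)
    (u : ℝ → E) (hu : MeasureTheory.Integrable u (volume.restrict (Ioc (0:ℝ) 1))) :
    Continuous fun t => ∫ s in (0:ℝ)..1, G t s • u s := by
  have heq : (fun t => ∫ s in (0:ℝ)..1, G t s • u s)
      = fun t => ∫ s, G t s • u s ∂(volume.restrict (Ioc (0:ℝ) 1)) :=
    funext fun t => intervalIntegral.integral_of_le zero_le_one
  rw [heq, continuous_iff_continuousAt]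
  intro t₀
  obtain ⟨C, hC⟩ := IsCompact.exists_bound_of_continuousOn
    ((isCompact_Icc (a := t₀ - 1) (b := t₀ + 1)).prod (isCompact_Icc (a := (0:ℝ)) (b := 1)))
    (f := fun p : ℝ × ℝ => G p.1 p.2) hG.continuousOn
  refine MeasureTheory.continuousAt_of_dominated (bound := fun s => C * ‖u s‖) ?_ ?_ ?_ ?_
  · exact Filter.Eventually.of_forall fun t =>
      ((hG.comp (continuous_const.prodMk continuous_id)).aestronglyMeasurable).smul
        hu.aestronglyMeasurable
  · refine Filter.eventually_of_mem
      (Icc_mem_nhds (by linarith) (by linarith) :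
        Icc (t₀ - 1) (t₀ + 1) ∈ nhds t₀) fun t ht => ?_
    filter_upwards [MeasureTheory.ae_restrict_mem measurableSet_Ioc] with s hs
    have hsIcc : s ∈ Icc (0: ℝ) 1 := ⟨hs.1.le, hs.2⟩
    have hb := hC (t, s) ⟨ht, hsIcc⟩
    rw [norm_smul]
    exact mul_le_mul_of_nonneg_right hb (norm_nonneg _)
  · exact hu.norm.const_mul C
  · exact Filter.Eventually.of_forall fun s =>
      ((hG.comp (continuous_id.prodMk continuous_const)).smul continuous_const).continuousAt

end Stmt9Aux

/-- the operator `u ↦ N_F(h + H(u))` is Lipschitz in Hausdorff distance on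
`L¹([0,1],E)` with constant `‖μ‖₁ · sup|G|`; in particular it is a multivalued contraction
when `‖μ‖₁ · sup|G| < 1`. -/
theorem stmt9
    (E : Type*) [NormedAddCommGroup E] [NormedSpace ℝ E] [CompleteSpace E]
    [MeasurableSpace E] [BorelSpace E] [SecondCountableTopology E]
    (F : ℝ → E → Set E)
    (hFne : ∀ t x, (F t x).Nonempty)
    (hFcl : ∀ t x, IsClosed (F t x))
    (hFbd : ∀ t x, Bornology.IsBounded (F t x))
    (hFmeas : ∀ x : E, MeasurableSet {p : ℝ × E | p.2 ∈ F p.1 x})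
    (μf α : ℝ → ℝ)
    (hμint : IntegrableOn μf (Icc (0:ℝ) 1))
    (hαint : IntegrableOn α (Icc (0:ℝ) 1))
    (hLip : ∀ᵐ t ∂(volume.restrict (Icc (0:ℝ) 1)),
      ∀ x y : E, hausdorffDist (F t x) (F t y) ≤ μf t * ‖x - y‖)
    (hα : ∀ᵐ t ∂(volume.restrict (Icc (0:ℝ) 1)), infDist 0 (F t 0) ≤ α t)
    (h : ℝ → E) (hh : Continuous h)
    (G : ℝ → ℝ → ℝ) (hG : Continuous fun p : ℝ × ℝ => G p.1 p.2)
    (Φ : Lp E 1 (volume.restrict (Icc (0:ℝ) 1)) → Set (Lp E 1 (volume.restrict (Icc (0:ℝ) 1))))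
    (hΦ : ∀ u, Φ u = {w | ∀ᵐ t ∂(volume.restrict (Icc (0:ℝ) 1)),
      w t ∈ F t (h t + ∫ s in (0:ℝ)..1, G t s • u s)}) :
    ∀ u₁ u₂, hausdorffDist (Φ u₁) (Φ u₂) ≤
      (∫ t in (0:ℝ)..1, μf t) *
        (⨆ p : Icc (0:ℝ) 1 ×ˢ Icc (0:ℝ) 1, |G (p : ℝ × ℝ).1 (p : ℝ × ℝ).2|) *
          dist u₁ u₂ := by
  intro u₁ u₂
  rcases subsingleton_or_nontrivial E with hsub | hnt
  · have hu : u₁ = u₂ := Lp.ext (Filter.Eventually.of_forall fun t => Subsingleton.elim _ _)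
    rw [hu, dist_self, mul_zero, hausdorffDist_self_zero]
  haveI : IsFiniteMeasure (volume.restrict (Icc (0:ℝ) 1)) := ⟨by
    rw [Measure.restrict_apply_univ]
    exact measure_Icc_lt_top⟩
  set c : ℝ := ⨆ p : Icc (0:ℝ) 1 ×ˢ Icc (0:ℝ) 1, |G (p : ℝ × ℝ).1 (p : ℝ × ℝ).2| with hc
  have hbdd : BddAbove (range fun p : Icc (0:ℝ) 1 ×ˢ Icc (0:ℝ) 1 =>
      |G (p : ℝ × ℝ).1 (p : ℝ × ℝ).2|) := by
    have h1 : (range fun p : Icc (0:ℝ) 1 ×ˢ Icc (0:ℝ) 1 => |G (p : ℝ × ℝ).1 (p : ℝ × ℝ).2|)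
        = (fun p : ℝ × ℝ => |G p.1 p.2|) '' (Icc (0:ℝ) 1 ×ˢ Icc (0:ℝ) 1) := by
      ext y
      constructor
      · rintro ⟨⟨p, hp⟩, rfl⟩; exact ⟨p, hp, rfl⟩
      · rintro ⟨p, hp, rfl⟩; exact ⟨⟨p, hp⟩, rfl⟩
    rw [h1]
    exact ((isCompact_Icc.prod isCompact_Icc).image_of_continuousOn
      hG.abs.continuousOn).bddAbove
  have hcle : ∀ t s : ℝ, t ∈ Icc (0:ℝ) 1 → s ∈ Icc (0:ℝ) 1 → |G t s| ≤ c := by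
    intro t s ht hs
    exact le_ciSup hbdd (⟨(t, s), Set.mk_mem_prod ht hs⟩ : Icc (0:ℝ) 1 ×ˢ Icc (0:ℝ) 1)
  have hc0 : (0:ℝ) ≤ c :=
    le_trans (abs_nonneg (G 0 0)) (hcle 0 0 ⟨le_rfl, zero_le_one⟩ ⟨le_rfl, zero_le_one⟩)
  have hμae0 : ∀ᵐ t ∂(volume.restrict (Icc (0:ℝ) 1)), 0 ≤ μf t := by
    obtain ⟨x, y, hxy⟩ := exists_pair_ne E
    filter_upwards [hLip] with t hLt
    have h1 : 0 ≤ μf t * ‖x - y‖ := le_trans hausdorffDist_nonneg (hLt x y)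
    have h2 : 0 < ‖x - y‖ := by rwa [norm_pos_iff, sub_ne_zero]
    nlinarith
  have hM0 : 0 ≤ ∫ t in (0:ℝ)..1, μf t :=
    intervalIntegral.integral_nonneg_of_ae_restrict zero_le_one hμae0
  have hMν : ∫ t in (0:ℝ)..1, μf t = ∫ t, μf t ∂(volume.restrict (Icc (0:ℝ) 1)) := by
    rw [intervalIntegral.integral_of_le zero_le_one]
    exact (MeasureTheory.integral_Icc_eq_integral_Ioc).symm
  have hμint' : Integrable μf (volume.restrict (Icc (0:ℝ) 1)) := hμint
  have hνuniv : ((volume.restrict (Icc (0:ℝ) 1)) univ).toReal = 1 := by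
    rw [Measure.restrict_apply_univ, Real.volume_Icc]
    norm_num
  have hdist_eq : ∀ f g : Lp E 1 (volume.restrict (Icc (0:ℝ) 1)), dist f g = ∫ s, ‖f s - g s‖ ∂(volume.restrict (Icc (0:ℝ) 1)) := by
    intro f g
    rw [dist_eq_norm, L1.norm_eq_integral_norm]
    refine integral_congr_ae ?_
    filter_upwards [Lp.coeFn_sub f g] with s hs
    rw [hs]
    rfl
  have hle : volume.restrict (Ioc (0:ℝ) 1) ≤ volume.restrict (Icc (0:ℝ) 1) :=
    Measure.restrict_mono Ioc_subset_Icc_self le_rfl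
  have huint : ∀ u : Lp E 1 (volume.restrict (Icc (0:ℝ) 1)), Integrable (u : ℝ → E) (volume.restrict (Ioc (0:ℝ) 1)) :=
    fun u => (L1.integrable_coeFn u).mono_measure hle
  have hGint : ∀ (u : Lp E 1 (volume.restrict (Icc (0:ℝ) 1))) (t : ℝ),
      Integrable (fun s => G t s • (u : ℝ → E) s) (volume.restrict (Ioc (0:ℝ) 1)) := by
    intro u t
    obtain ⟨C, hC⟩ := IsCompact.exists_bound_of_continuousOn
      (isCompact_Icc (a := (0:ℝ)) (b := 1)) (f := fun s : ℝ => G t s)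
      (hG.comp (continuous_const.prodMk continuous_id)).continuousOn
    refine Integrable.mono' ((huint u).norm.const_mul C)
      (((hG.comp (continuous_const.prodMk continuous_id)).aestronglyMeasurable).smul
        (huint u).aestronglyMeasurable) ?_
    filter_upwards [ae_restrict_mem measurableSet_Ioc] with s hs
    rw [norm_smul]
    exact mul_le_mul_of_nonneg_right (hC s ⟨hs.1.le, hs.2⟩) (norm_nonneg _)
  have hx12 : ∀ (v₁ v₂ : Lp E 1 (volume.restrict (Icc (0:ℝ) 1))), ∀ t ∈ Icc (0:ℝ) 1,
      ‖(h t + ∫ s in (0:ℝ)..1, G t s • v₁ s) - (h t + ∫ s in (0:ℝ)..1, G t s • v₂ s)‖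
        ≤ c * dist v₁ v₂ := by
    intro v₁ v₂ t ht
    rw [add_sub_add_left_eq_sub]
    rw [intervalIntegral.integral_of_le zero_le_one, intervalIntegral.integral_of_le zero_le_one,
      ← MeasureTheory.integral_sub (hGint v₁ t) (hGint v₂ t)]
    calc ‖∫ s in Ioc (0:ℝ) 1, (G t s • (v₁ : ℝ → E) s - G t s • (v₂ : ℝ → E) s)‖
        ≤ ∫ s in Ioc (0:ℝ) 1, ‖G t s • (v₁ : ℝ → E) s - G t s • (v₂ : ℝ → E) s‖ :=
          MeasureTheory.norm_integral_le_integral_norm _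
      _ ≤ ∫ s in Ioc (0:ℝ) 1, c * ‖(v₁ : ℝ → E) s - (v₂ : ℝ → E) s‖ := by
          refine MeasureTheory.integral_mono_ae ((hGint v₁ t).sub (hGint v₂ t)).norm
            (((huint v₁).sub (huint v₂)).norm.const_mul c) ?_
          filter_upwards [ae_restrict_mem measurableSet_Ioc] with s hs
          rw [← smul_sub, norm_smul, Real.norm_eq_abs]
          exact mul_le_mul_of_nonneg_right (hcle t s ht ⟨hs.1.le, hs.2⟩) (norm_nonneg _)
      _ = c * ∫ s in Ioc (0:ℝ) 1, ‖(v₁ : ℝ → E) s - (v₂ : ℝ → E) s‖ :=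
          MeasureTheory.integral_const_mul c _
      _ = c * dist v₁ v₂ := by
          rw [hdist_eq v₁ v₂]
          exact congrArg (fun r => c * r) (MeasureTheory.integral_Icc_eq_integral_Ioc).symm
  have hxcont : ∀ u : Lp E 1 (volume.restrict (Icc (0:ℝ) 1)), Continuous fun t => h t + ∫ s in (0:ℝ)..1, G t s • u s :=
    fun u => hh.add (Stmt9Aux.cont_int G hG _ (huint u))
  have key : ∀ v₁ v₂ : Lp E 1 (volume.restrict (Icc (0:ℝ) 1)), ∀ w₁ ∈ Φ v₁,
      infDist w₁ (Φ v₂) ≤ (∫ t in (0:ℝ)..1, μf t) * c * dist v₁ v₂ := by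
    intro v₁ v₂ w₁ hw₁
    have hw₁mem : ∀ᵐ t ∂(volume.restrict (Icc (0:ℝ) 1)), (w₁ : ℝ → E) t ∈ F t (h t + ∫ s in (0:ℝ)..1, G t s • v₁ s) := by
      rw [hΦ v₁] at hw₁
      exact hw₁
    set x₂ : ℝ → E := fun t => h t + ∫ s in (0:ℝ)..1, G t s • v₂ s with hx₂
    have hSmeas : ∀ (e : E) (q : ℝ), NullMeasurableSet {t | infDist e (F t (x₂ t)) < q} (volume.restrict (Icc (0:ℝ) 1)) := by
      intro e q
      have hz : ∀ k : ℕ, ∃ z : ℝ → E, Measurable z ∧ (range z).Countable ∧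
          ∀ t ∈ Icc (0:ℝ) 1, ‖z t - x₂ t‖ ≤ 1 / (k + 1) := fun k =>
        Stmt9Aux.exists_step x₂ (hxcont v₂).continuousOn (by positivity)
      choose z hzm hzc hzd using hz
      set B : Set ℝ := ⋃ q' : ℚ, ⋃ _ : (q' : ℝ) < q, ⋃ j : ℕ,
          ⋂ k : ℕ, ⋂ _ : j ≤ k, {t | infDist e (F t (z k t)) < (q' : ℝ)} with hB
      have hBnull : NullMeasurableSet B (volume.restrict (Icc (0:ℝ) 1)) := by
        refine NullMeasurableSet.iUnion fun q' => ?_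
        refine NullMeasurableSet.iUnion fun _ => ?_
        refine NullMeasurableSet.iUnion fun j => ?_
        refine NullMeasurableSet.iInter fun k => ?_
        refine NullMeasurableSet.iInter fun _ => ?_
        exact Stmt9Aux.hit_nullmeas F hFne hFmeas (z k) (hzm k) (hzc k) e _
      refine hBnull.congr (eventuallyEq_set.2 ?_)
      filter_upwards [hLip, hμae0, ae_restrict_mem measurableSet_Icc] with t hLt hμt htI
      have hdk : ∀ k : ℕ, |infDist e (F t (z k t)) - infDist e (F t (x₂ t))|
          ≤ μf t * (1 / ((k : ℝ) + 1)) := by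
        intro k
        have hfin : EMetric.hausdorffEdist (F t (z k t)) (F t (x₂ t)) ≠ ⊤ :=
          hausdorffEdist_ne_top_of_nonempty_of_bounded (hFne _ _) (hFne _ _)
            (hFbd _ _) (hFbd _ _)
        have hfin' : EMetric.hausdorffEdist (F t (x₂ t)) (F t (z k t)) ≠ ⊤ := by
          rw [EMetric.hausdorffEdist] at hfin ⊢; rwa [hausdorffEDist_comm] at hfin
        have hH : hausdorffDist (F t (z k t)) (F t (x₂ t)) ≤ μf t * (1 / ((k : ℝ) + 1)) := by
          refine le_trans (hLt _ _) (mul_le_mul_of_nonneg_left ?_ hμt)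
          exact hzd k t htI
        have h1 : infDist e (F t (z k t)) ≤ infDist e (F t (x₂ t))
            + hausdorffDist (F t (x₂ t)) (F t (z k t)) :=
          infDist_le_infDist_add_hausdorffDist hfin'
        have h2 : infDist e (F t (x₂ t)) ≤ infDist e (F t (z k t))
            + hausdorffDist (F t (z k t)) (F t (x₂ t)) :=
          infDist_le_infDist_add_hausdorffDist hfin
        rw [hausdorffDist_comm] at h1
        rw [abs_sub_le_iff]
        constructor <;> linarith
      have harith : ∀ β : ℝ, 0 < β → ∀ j k : ℕ, μf t / β < (j : ℝ) → j ≤ k →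
          μf t * (1 / ((k : ℝ) + 1)) < β := by
        intro β hβ j k hj hk
        have hk1 : (0:ℝ) < (k : ℝ) + 1 := by positivity
        have hjk : μf t / β < (k : ℝ) + 1 := by
          refine lt_of_lt_of_le hj ?_
          have hc' : (j : ℝ) ≤ (k : ℝ) := Nat.cast_le.2 hk
          linarith
        rw [mul_one_div, div_lt_iff₀ hk1]
        calc μf t = μf t / β * β := (div_mul_cancel₀ _ hβ.ne').symm
          _ < ((k : ℝ) + 1) * β := mul_lt_mul_of_pos_right hjk hβ
          _ = β * ((k : ℝ) + 1) := mul_comm _ _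
      constructor
      · intro hB'
        simp only [hB, mem_iUnion, mem_iInter, mem_setOf_eq] at hB'
        obtain ⟨q', hq', j, hj⟩ := hB'
        have hd : infDist e (F t (x₂ t)) ≤ (q' : ℝ) := by
          refine le_of_forall_pos_le_add fun γ hγ => ?_
          obtain ⟨k₀, hk₀⟩ := exists_nat_gt (μf t / γ)
          have h1 := hj (max j k₀) (le_max_left _ _)
          have h2 := (abs_sub_le_iff.1 (hdk (max j k₀))).2
          have h3 := harith γ hγ k₀ (max j k₀) hk₀ (le_max_right _ _)
          linarith
        exact lt_of_le_of_lt hd hq'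
      · intro hlt
        obtain ⟨q', hq'1, hq'2⟩ := exists_rat_btwn hlt
        simp only [hB, mem_iUnion, mem_iInter, mem_setOf_eq]
        refine ⟨q', hq'2, ?_⟩
        have hβ0 : 0 < (q' : ℝ) - infDist e (F t (x₂ t)) := by linarith
        obtain ⟨j, hj⟩ := exists_nat_gt (μf t / ((q' : ℝ) - infDist e (F t (x₂ t))))
        refine ⟨j, fun k hk => ?_⟩
        have h2 := (abs_sub_le_iff.1 (hdk k)).1
        have h3 := harith _ hβ0 j k hj hk
        linarith
    set ρ : ℝ → ℝ := fun t => μf t * (c * dist v₁ v₂) with hρ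
    have hρm : AEMeasurable ρ (volume.restrict (Icc (0:ℝ) 1)) := (hμint'.aestronglyMeasurable.aemeasurable).mul_const _
    have hd : ∀ᵐ t ∂(volume.restrict (Icc (0:ℝ) 1)), infDist ((w₁ : ℝ → E) t) (F t (x₂ t)) ≤ ρ t := by
      filter_upwards [hw₁mem, hLip, hμae0, ae_restrict_mem measurableSet_Icc]
        with t h1 h2 h3 h4
      have hfin : EMetric.hausdorffEdist (F t (h t + ∫ s in (0:ℝ)..1, G t s • (v₁ : ℝ → E) s))
          (F t (x₂ t)) ≠ ⊤ :=
        hausdorffEdist_ne_top_of_nonempty_of_bounded (hFne _ _) (hFne _ _) (hFbd _ _) (hFbd _ _)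
      calc infDist ((w₁ : ℝ → E) t) (F t (x₂ t))
          ≤ hausdorffDist (F t (h t + ∫ s in (0:ℝ)..1, G t s • (v₁ : ℝ → E) s))
            (F t (x₂ t)) := infDist_le_hausdorffDist_of_mem h1 hfin
        _ ≤ μf t * ‖(h t + ∫ s in (0:ℝ)..1, G t s • (v₁ : ℝ → E) s) - x₂ t‖ := h2 _ _
        _ ≤ μf t * (c * dist v₁ v₂) := mul_le_mul_of_nonneg_left (hx12 v₁ v₂ t h4) h3
    refine le_of_forall_pos_le_add fun ε hε => ?_
    obtain ⟨v, hvm, hv⟩ := Stmt9Aux.SEL (volume.restrict (Icc (0:ℝ) 1)) (fun t => F t (x₂ t)) (fun t => hFcl _ _)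
      (fun t => hFne _ _) hSmeas (w₁ : ℝ → E) (Lp.aestronglyMeasurable w₁) ρ hρm hd hε
    have hvint : Integrable v (volume.restrict (Icc (0:ℝ) 1)) := by
      refine Integrable.mono' (g := fun t => ‖(w₁ : ℝ → E) t‖ + (|μf t| * (c * dist v₁ v₂) + ε))
        ((L1.integrable_coeFn w₁).norm.add ((hμint'.abs.mul_const _).add (integrable_const ε))) hvm ?_
      filter_upwards [hv] with t ht
      have h1 : ‖v t‖ ≤ ‖(w₁ : ℝ → E) t‖ + dist ((w₁ : ℝ → E) t) (v t) := by
        rw [dist_eq_norm]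
        calc ‖v t‖ = ‖(w₁ : ℝ → E) t - ((w₁ : ℝ → E) t - v t)‖ := by rw [sub_sub_cancel]
          _ ≤ ‖(w₁ : ℝ → E) t‖ + ‖(w₁ : ℝ → E) t - v t‖ := norm_sub_le _ _
      have h2 := ht.2
      have h3 : ρ t ≤ |μf t| * (c * dist v₁ v₂) :=
        mul_le_mul_of_nonneg_right (le_abs_self _) (mul_nonneg hc0 dist_nonneg)
      calc ‖v t‖ ≤ ‖(w₁ : ℝ → E) t‖ + dist ((w₁ : ℝ → E) t) (v t) := h1
        _ ≤ ‖(w₁ : ℝ → E) t‖ + (|μf t| * (c * dist v₁ v₂) + ε) := by linarith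
    have hmem2 : MemLp v 1 (volume.restrict (Icc (0:ℝ) 1)) := memLp_one_iff_integrable.2 hvint
    have hw₂coe : (hmem2.toLp v : ℝ → E) =ᵐ[(volume.restrict (Icc (0:ℝ) 1))] v := hmem2.coeFn_toLp
    have hw₂Φ : hmem2.toLp v ∈ Φ v₂ := by
      rw [hΦ v₂]
      have hthis : ∀ᵐ t ∂(volume.restrict (Icc (0:ℝ) 1)), (hmem2.toLp v : ℝ → E) t ∈ F t (x₂ t) := by
        filter_upwards [hw₂coe, hv] with t h1 h2
        rw [h1]; exact h2.1
      exact hthis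
    have hdd : dist w₁ (hmem2.toLp v) ≤ (∫ t in (0:ℝ)..1, μf t) * c * dist v₁ v₂ + ε := by
      rw [hdist_eq]
      have h1 : ∫ t, ‖(w₁ : ℝ → E) t - (hmem2.toLp v : ℝ → E) t‖ ∂(volume.restrict (Icc (0:ℝ) 1))
          = ∫ t, ‖(w₁ : ℝ → E) t - v t‖ ∂(volume.restrict (Icc (0:ℝ) 1)) := by
        refine integral_congr_ae ?_
        filter_upwards [hw₂coe] with t h2
        rw [h2]
      rw [h1]
      have h2 : ∫ t, ‖(w₁ : ℝ → E) t - v t‖ ∂(volume.restrict (Icc (0:ℝ) 1)) ≤ ∫ t, (ρ t + ε) ∂(volume.restrict (Icc (0:ℝ) 1)) := by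
        refine MeasureTheory.integral_mono_ae (((L1.integrable_coeFn w₁).sub hvint).norm)
          ((hμint'.mul_const _).add (integrable_const ε)) ?_
        filter_upwards [hv] with t ht
        rw [← dist_eq_norm]
        exact ht.2
      refine le_trans h2 ?_
      rw [MeasureTheory.integral_add (hμint'.mul_const _) (integrable_const ε),
        MeasureTheory.integral_const, smul_eq_mul, MeasureTheory.integral_mul_const,
        measureReal_def, hνuniv, one_mul, ← hMν]
      refine le_of_eq ?_
      ring
    calc infDist w₁ (Φ v₂) ≤ dist w₁ (hmem2.toLp v) := infDist_le_dist_of_mem hw₂Φ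
      _ ≤ _ := hdd
  refine hausdorffDist_le_of_infDist (mul_nonneg (mul_nonneg hM0 hc0) dist_nonneg) ?_ ?_
  · intro w hw
    exact key u₁ u₂ w hw
  · intro w hw
    rw [dist_comm u₁ u₂]
    exact key u₂ u₁ w hw
end
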